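/- Let Ω ⊂ ℝ^d be a bounded Lipschitz domain with diameter 1 placed so a diameter lies along the x₁-axis, and let h be its profile function h(x₁) = H^{d-1}({x' : (x₁,x') ∈ Ω}). Then for every k ≥ 1, μ_k(Ω) ≤ μ_k(h), where μ_k(Ω) is the k-th nonzero Neumann eigenvalue of the Laplacian on Ω and μ_k(h) is the relaxed Sturm–Liouville eigenvalue with weight h. -/

import Mathlib

open MeasureTheory

/-- The Rayleigh quotient with weight `h` of a function `u` on `(0,1)`. -/
noncomputable def rayleigh1D (h u : ℝ → ℝ) : ℝ :=
  (∫ x in (0:ℝ)..1, (deriv u x) ^ 2 * h x) / (∫ x in (0:ℝ)..1, (u x) ^ 2 * h x)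

/-- The relaxed `k`-th Sturm–Liouville eigenvalue with weight `h`: min-max of
Rayleigh quotients over `k`-dimensional subspaces of (smooth representatives of)
`H¹(0,1)` that are `L²`-orthogonal to `h`. -/
noncomputable def muk1D (k : ℕ) (h : ℝ → ℝ) : ℝ :=
  sInf {r | ∃ E : Submodule ℝ (ℝ → ℝ), Module.finrank ℝ E = k ∧
    (∀ u ∈ E, ContDiffOn ℝ 1 u (Set.Icc 0 1) ∧ (∫ x in (0:ℝ)..1, u x * h x) = 0) ∧
    r = sSup {s | ∃ u ∈ E, u ≠ 0 ∧ s = rayleigh1D h u}}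

/-- The Rayleigh quotient of `u` on a domain `Ω ⊆ ℝ × ℝ^m`. -/
noncomputable def rayleighD {m : ℕ} (Ω : Set (ℝ × (Fin m → ℝ)))
    (u : (ℝ × (Fin m → ℝ)) → ℝ) : ℝ :=
  (∫ x in Ω, ‖fderiv ℝ u x‖ ^ 2) / (∫ x in Ω, (u x) ^ 2)

/-- The `k`-th nonzero Neumann eigenvalue of the Laplacian on `Ω`, via the
min-max characterization over `k`-dimensional subspaces of (smooth
representatives of) `H¹(Ω)` orthogonal to constants. -/
noncomputable def mukNeumann {m : ℕ} (k : ℕ) (Ω : Set (ℝ × (Fin m → ℝ))) : ℝ :=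
  sInf {r | ∃ E : Submodule ℝ ((ℝ × (Fin m → ℝ)) → ℝ), Module.finrank ℝ E = k ∧
    (∀ u ∈ E, ContDiffOn ℝ 1 u (closure Ω) ∧ (∫ x in Ω, u x) = 0) ∧
    r = sSup {s | ∃ u ∈ E, u ≠ 0 ∧ s = rayleighD Ω u}}

section AuxStmt19
open Set

variable {m : ℕ}

/-- First coordinate of a point of the open set lies in the open interval. -/
lemma aux_mem_Ioo {Ω : Set (ℝ × (Fin m → ℝ))} (hopen : IsOpen Ω)
    (hproj : ∀ p ∈ Ω, p.1 ∈ Set.Icc (0:ℝ) 1) {p : ℝ × (Fin m → ℝ)} (hp : p ∈ Ω) :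
    p.1 ∈ Set.Ioo (0:ℝ) 1 := by
  obtain ⟨ε, hε, hball⟩ := Metric.isOpen_iff.1 hopen p hp
  have h1 : (p.1 - ε/2, p.2) ∈ Ω := by
    apply hball
    simp only [Metric.mem_ball, Prod.dist_eq, Real.dist_eq, dist_self, max_lt_iff]
    rw [abs_of_nonpos (by linarith)]
    constructor <;> linarith
  have h2 : (p.1 + ε/2, p.2) ∈ Ω := by
    apply hball
    simp only [Metric.mem_ball, Prod.dist_eq, Real.dist_eq, dist_self, max_lt_iff]
    rw [abs_of_nonneg (by linarith)]
    constructor <;> linarith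
  have g1 := (hproj _ h1).1
  have g2 := (hproj _ h2).2
  constructor <;> [linarith; linarith]

lemma aux_slice_empty {Ω : Set (ℝ × (Fin m → ℝ))} (hopen : IsOpen Ω)
    (hproj : ∀ p ∈ Ω, p.1 ∈ Set.Icc (0:ℝ) 1) {x : ℝ} (hx : x ∉ Set.Ioo (0:ℝ) 1) :
    {y : Fin m → ℝ | (x, y) ∈ Ω} = ∅ := by
  ext y
  simp only [Set.mem_setOf_eq, Set.mem_empty_iff_false, iff_false]
  intro hy
  exact hx (aux_mem_Ioo hopen hproj hy)

/-- Fubini: integrating a function of the first coordinate over `Ω` gives the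
weighted 1D integral against the profile function. -/
lemma aux_fubini {Ω : Set (ℝ × (Fin m → ℝ))} (hopen : IsOpen Ω)
    (hbdd : Bornology.IsBounded Ω) (hproj : ∀ p ∈ Ω, p.1 ∈ Set.Icc (0:ℝ) 1)
    {h : ℝ → ℝ} (hh : ∀ x, h x = (volume {y : Fin m → ℝ | (x, y) ∈ Ω}).toReal)
    (g : ℝ → ℝ) (hg : Measurable g) (M : ℝ) (hM : ∀ x ∈ Set.Ioo (0:ℝ) 1, |g x| ≤ M) :
    ∫ p in Ω, g p.1 = ∫ x in (0:ℝ)..1, g x * h x := by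
  have hmeas : MeasurableSet Ω := hopen.measurableSet
  have hM0 : 0 ≤ M := le_trans (abs_nonneg _) (hM (1/2) (by norm_num))
  set f : (ℝ × (Fin m → ℝ)) → ℝ := Ω.indicator (fun p => g p.1) with hf
  have hfmeas : Measurable f := (hg.comp measurable_fst).indicator hmeas
  have hbound : ∀ p, ‖f p‖ ≤ Ω.indicator (fun _ => M) p := by
    intro p
    by_cases hp : p ∈ Ω
    · rw [hf, Set.indicator_of_mem hp, Set.indicator_of_mem hp]
      exact hM _ (aux_mem_Ioo hopen hproj hp)
    · rw [hf, Set.indicator_of_notMem hp, Set.indicator_of_notMem hp]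
      simp
  have hconst : Integrable (Ω.indicator fun _ => M) (volume : Measure (ℝ × (Fin m → ℝ))) :=
    (integrable_indicator_iff hmeas).2 (integrableOn_const hbdd.measure_lt_top.ne)
  have hint : Integrable f (volume : Measure (ℝ × (Fin m → ℝ))) :=
    hconst.mono' hfmeas.aestronglyMeasurable (Filter.Eventually.of_forall hbound)
  have step1 : ∫ p in Ω, g p.1 = ∫ p, f p := (integral_indicator hmeas).symm
  rw [step1]
  rw [show (volume : Measure (ℝ × (Fin m → ℝ))) = (volume : Measure ℝ).prod volume from
    Measure.volume_eq_prod ℝ (Fin m → ℝ)] at hint ⊢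
  rw [integral_prod f hint]
  have inner : ∀ x : ℝ, (∫ y : Fin m → ℝ, f (x, y)) = g x * h x := by
    intro x
    have hsl : MeasurableSet {y : Fin m → ℝ | (x, y) ∈ Ω} :=
      (measurable_prodMk_left (m := inferInstance) hmeas)
    have : (fun y : Fin m → ℝ => f (x, y)) =
        ({y : Fin m → ℝ | (x, y) ∈ Ω}).indicator (fun _ => g x) := by
      funext y
      by_cases hy : (x, y) ∈ Ω
      · rw [hf, Set.indicator_of_mem hy, Set.indicator_of_mem (by exact hy)]
      · rw [hf, Set.indicator_of_notMem hy, Set.indicator_of_notMem (by exact hy)]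
    rw [this, integral_indicator_const _ hsl, hh x, smul_eq_mul, mul_comm]
    rfl
  simp_rw [inner]
  have hzero : ∀ x ∉ Set.Ioc (0:ℝ) 1, g x * h x = 0 := by
    intro x hx
    have hx' : x ∉ Set.Ioo (0:ℝ) 1 := fun hc => hx ⟨hc.1, hc.2.le⟩
    rw [hh x, aux_slice_empty hopen hproj hx']
    simp
  rw [intervalIntegral.integral_of_le zero_le_one,
    setIntegral_eq_integral_of_forall_compl_eq_zero hzero]

lemma aux_h_meas {Ω : Set (ℝ × (Fin m → ℝ))} (hopen : IsOpen Ω)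
    {h : ℝ → ℝ} (hh : ∀ x, h x = (volume {y : Fin m → ℝ | (x, y) ∈ Ω}).toReal) :
    Measurable h := by
  have : h = fun x => (volume (Prod.mk x ⁻¹' Ω)).toReal := funext fun x => hh x
  rw [this]
  exact (measurable_measure_prodMk_left hopen.measurableSet).ennreal_toReal

lemma aux_h_nonneg {Ω : Set (ℝ × (Fin m → ℝ))}
    {h : ℝ → ℝ} (hh : ∀ x, h x = (volume {y : Fin m → ℝ | (x, y) ∈ Ω}).toReal) (x : ℝ) :
    0 ≤ h x := by rw [hh]; exact ENNReal.toReal_nonneg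

lemma aux_h_bdd {Ω : Set (ℝ × (Fin m → ℝ))} (hbdd : Bornology.IsBounded Ω)
    {h : ℝ → ℝ} (hh : ∀ x, h x = (volume {y : Fin m → ℝ | (x, y) ∈ Ω}).toReal) :
    ∃ C : ℝ, ∀ x, h x ≤ C := by
  obtain ⟨R, hR⟩ := hbdd.subset_closedBall 0
  refine ⟨(volume (Metric.closedBall (0 : Fin m → ℝ) R)).toReal, fun x => ?_⟩
  rw [hh]
  refine ENNReal.toReal_mono (measure_closedBall_lt_top).ne (measure_mono ?_)
  intro y hy
  have := hR hy
  simp only [Metric.mem_closedBall] at this ⊢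
  calc dist y 0 ≤ dist (x, y) (0 : ℝ × (Fin m → ℝ)) := by
        rw [Prod.dist_eq]; exact le_max_right _ _
    _ ≤ R := this

/-- Interval integrability of a bounded measurable function times the weight. -/
lemma aux_intInt {h : ℝ → ℝ} (hmeas : Measurable h) (hnn : ∀ x, 0 ≤ h x)
    {C : ℝ} (hC : ∀ x, h x ≤ C)
    (g : ℝ → ℝ) (hg : Measurable g) (M : ℝ) (hM : ∀ x ∈ Set.Ioc (0:ℝ) 1, |g x| ≤ M) :
    IntervalIntegrable (fun x => g x * h x) volume 0 1 := by
  rw [intervalIntegrable_iff_integrableOn_Ioc_of_le zero_le_one]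
  have hconst : IntegrableOn (fun _ : ℝ => M * C) (Set.Ioc (0:ℝ) 1) volume :=
    integrableOn_const (by simp)
  refine hconst.mono' ((hg.mul hmeas).aestronglyMeasurable.restrict) ?_
  rw [ae_restrict_iff' measurableSet_Ioc]
  refine Filter.Eventually.of_forall fun x hx => ?_
  have h1 : |g x| ≤ M := hM x hx
  have h2 : 0 ≤ h x := hnn x
  have h3 : h x ≤ C := hC x
  rw [Real.norm_eq_abs, abs_mul, abs_of_nonneg h2]
  exact mul_le_mul h1 h3 h2 (le_trans (abs_nonneg _) h1)

/-- Norm of the differential of `u ∘ fst`. -/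
lemma aux_fderiv_norm {u : ℝ → ℝ} {c : ℝ} {p : ℝ × (Fin m → ℝ)}
    (hu : HasDerivAt u c p.1) :
    fderiv ℝ (fun q : ℝ × (Fin m → ℝ) => u q.1) p =
      c • ContinuousLinearMap.fst ℝ ℝ (Fin m → ℝ) ∧
    ‖fderiv ℝ (fun q : ℝ × (Fin m → ℝ) => u q.1) p‖ = |c| := by
  have hF : HasFDerivAt (fun q : ℝ × (Fin m → ℝ) => u q.1)
      (c • ContinuousLinearMap.fst ℝ ℝ (Fin m → ℝ)) p := by
    have h1 := hu.hasFDerivAt.comp p (hasFDerivAt_fst (p := p))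
    refine h1.congr_fderiv ?_
    ext v <;> simp [mul_comm]
  have heq := hF.fderiv
  refine ⟨heq, ?_⟩
  rw [heq]
  apply le_antisymm
  · refine ContinuousLinearMap.opNorm_le_bound _ (abs_nonneg c) fun v => ?_
    simp only [ContinuousLinearMap.coe_smul', Pi.smul_apply,
      ContinuousLinearMap.coe_fst', smul_eq_mul, Real.norm_eq_abs, abs_mul]
    exact mul_le_mul_of_nonneg_left (by simpa using norm_fst_le v) (abs_nonneg c)
  · have := (c • ContinuousLinearMap.fst ℝ ℝ (Fin m → ℝ)).le_opNorm
      ((1 : ℝ), (0 : Fin m → ℝ))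
    simp only [ContinuousLinearMap.coe_smul', Pi.smul_apply,
      ContinuousLinearMap.coe_fst', smul_eq_mul, mul_one, Real.norm_eq_abs,
      Prod.norm_def, norm_one, norm_zero, max_eq_left zero_le_one] at this
    simpa using this

/-- The clamped extension of `u` to all of `ℝ`. -/
noncomputable def clampExt (u : ℝ → ℝ) : ℝ → ℝ := fun x => u (min (max x 0) 1)

lemma clampExt_continuous {u : ℝ → ℝ} (hu : ContinuousOn u (Set.Icc 0 1)) :
    Continuous (clampExt u) := by
  apply hu.comp_continuous (by fun_prop)
  intro x
  constructor
  · exact le_min (le_max_right _ _) zero_le_one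
  · exact min_le_right _ _

lemma clampExt_eq {u : ℝ → ℝ} {x : ℝ} (hx : x ∈ Set.Icc (0:ℝ) 1) :
    clampExt u x = u x := by
  unfold clampExt
  rw [max_eq_left hx.1, min_eq_left hx.2]

/-- The three Fubini identities for a `C¹` function of the first coordinate. -/
lemma aux_key {Ω : Set (ℝ × (Fin m → ℝ))} (hopen : IsOpen Ω)
    (hbdd : Bornology.IsBounded Ω) (hproj : ∀ p ∈ Ω, p.1 ∈ Set.Icc (0:ℝ) 1)
    {h : ℝ → ℝ} (hh : ∀ x, h x = (volume {y : Fin m → ℝ | (x, y) ∈ Ω}).toReal)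
    {u : ℝ → ℝ} (hu : ContDiffOn ℝ 1 u (Set.Icc 0 1)) :
    (∫ p in Ω, ‖fderiv ℝ (fun q : ℝ × (Fin m → ℝ) => u q.1) p‖ ^ 2) =
      (∫ x in (0:ℝ)..1, (deriv u x) ^ 2 * h x) ∧
    (∫ p in Ω, (u p.1) ^ 2) = (∫ x in (0:ℝ)..1, (u x) ^ 2 * h x) ∧
    (∫ p in Ω, u p.1) = (∫ x in (0:ℝ)..1, u x * h x) := by
  have hmeasΩ : MeasurableSet Ω := hopen.measurableSet
  have hcont : Continuous (clampExt u) := clampExt_continuous hu.continuousOn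
  obtain ⟨C, hC⟩ := isCompact_Icc.exists_bound_of_continuousOn
    (hcont.continuousOn : ContinuousOn (clampExt u) (Set.Icc (0:ℝ) 1))
  -- bound for the derivative
  have hdw : ContinuousOn (derivWithin u (Set.Icc 0 1)) (Set.Icc 0 1) :=
    hu.continuousOn_derivWithin (uniqueDiffOn_Icc zero_lt_one) le_rfl
  obtain ⟨D, hD⟩ := isCompact_Icc.exists_bound_of_continuousOn hdw
  have hderiv_eq : ∀ x ∈ Set.Ioo (0:ℝ) 1, deriv u x = derivWithin u (Set.Icc 0 1) x :=
    fun x hx => (derivWithin_of_mem_nhds (Icc_mem_nhds hx.1 hx.2)).symm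
  have hderivBound : ∀ x ∈ Set.Ioo (0:ℝ) 1, |(deriv u x) ^ 2| ≤ D ^ 2 := by
    intro x hx
    have h1 : |deriv u x| ≤ D := by
      rw [hderiv_eq x hx]
      simpa using hD x ⟨hx.1.le, hx.2.le⟩
    rw [abs_pow]
    exact pow_le_pow_left₀ (abs_nonneg _) h1 2
  refine ⟨?_, ?_, ?_⟩
  · -- gradient term
    have step1 : (∫ p in Ω, ‖fderiv ℝ (fun q : ℝ × (Fin m → ℝ) => u q.1) p‖ ^ 2) =
        ∫ p in Ω, (deriv u p.1) ^ 2 := by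
      refine setIntegral_congr_fun hmeasΩ fun p hp => ?_
      have hio := aux_mem_Ioo hopen hproj hp
      have hd : HasDerivAt u (deriv u p.1) p.1 :=
        ((hu.contDiffAt (Icc_mem_nhds hio.1 hio.2)).differentiableAt one_ne_zero).hasDerivAt
      rw [(aux_fderiv_norm hd).2, sq_abs]
    rw [step1]
    exact aux_fubini hopen hbdd hproj hh _ ((measurable_deriv u).pow_const 2) (D^2) hderivBound
  · -- L² term
    have step1 : (∫ p in Ω, (u p.1) ^ 2) = ∫ p in Ω, (clampExt u p.1) ^ 2 := by
      refine setIntegral_congr_fun hmeasΩ fun p hp => ?_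
      have hio := aux_mem_Ioo hopen hproj hp
      rw [clampExt_eq ⟨hio.1.le, hio.2.le⟩]
    rw [step1, aux_fubini hopen hbdd hproj hh (fun x => clampExt u x ^ 2) ((hcont.pow 2).measurable) (C^2)
      (fun x hx => by
        rw [abs_pow]
        exact pow_le_pow_left₀ (abs_nonneg _) (by simpa using hC x ⟨hx.1.le, hx.2.le⟩) 2)]
    refine intervalIntegral.integral_congr fun x hx => ?_
    rw [Set.uIcc_of_le zero_le_one] at hx
    rw [clampExt_eq hx]
  · -- mean term
    have step1 : (∫ p in Ω, u p.1) = ∫ p in Ω, clampExt u p.1 := by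
      refine setIntegral_congr_fun hmeasΩ fun p hp => ?_
      have hio := aux_mem_Ioo hopen hproj hp
      rw [clampExt_eq ⟨hio.1.le, hio.2.le⟩]
    rw [step1, aux_fubini hopen hbdd hproj hh _ hcont.measurable C
      (fun x hx => by simpa using hC x ⟨hx.1.le, hx.2.le⟩)]
    refine intervalIntegral.integral_congr fun x hx => ?_
    rw [Set.uIcc_of_le zero_le_one] at hx
    rw [clampExt_eq hx]

lemma aux_nonempty {Ω : Set (ℝ × (Fin m → ℝ))} (hopen : IsOpen Ω) (hne : Ω.Nonempty)
    (hbdd : Bornology.IsBounded Ω) (hproj : ∀ p ∈ Ω, p.1 ∈ Set.Icc (0:ℝ) 1)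
    {h : ℝ → ℝ} (hh : ∀ x, h x = (volume {y : Fin m → ℝ | (x, y) ∈ Ω}).toReal) (k : ℕ) :
    ∃ E : Submodule ℝ (ℝ → ℝ), Module.finrank ℝ E = k ∧
      ∀ u ∈ E, ContDiffOn ℝ 1 u (Set.Icc 0 1) ∧ (∫ x in (0:ℝ)..1, u x * h x) = 0 := by
  have hmeash := aux_h_meas hopen hh
  have hnn := aux_h_nonneg hh
  obtain ⟨C, hC⟩ := aux_h_bdd hbdd hh
  set J : ℕ → ℝ := fun n => ∫ x in (0:ℝ)..1, x ^ n * h x with hJ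
  have Jint : ∀ n : ℕ, IntervalIntegrable (fun x => x ^ n * h x) volume 0 1 := by
    intro n
    refine aux_intInt hmeash hnn hC _ (by fun_prop) 1 fun x hx => ?_
    rw [abs_pow]
    exact pow_le_one₀ (abs_nonneg _) (abs_le.2 ⟨by linarith [hx.1], hx.2⟩)
  have hJ0 : 0 < J 0 := by
    have hfub := aux_fubini hopen hbdd hproj hh (fun _ => (1:ℝ)) measurable_const 1
      (fun x _ => by norm_num)
    rw [setIntegral_const] at hfub
    have : J 0 = ∫ x in (0:ℝ)..1, 1 * h x := by
      simp only [hJ, pow_zero]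
    rw [this, ← hfub, smul_eq_mul, mul_one]
    exact ENNReal.toReal_pos (hopen.measure_pos volume hne).ne' hbdd.measure_lt_top.ne
  set c : ℕ → ℝ := fun n => J n / J 0 with hc
  set f : Fin k → (ℝ → ℝ) := fun i => fun x => x ^ (i.1 + 1) - c (i.1 + 1) with hfdef
  have hfC : ∀ i : Fin k, ContDiff ℝ 1 (f i) :=
    fun i => (contDiff_id.pow _).sub contDiff_const
  have hInt : ∀ i : Fin k, IntervalIntegrable (fun x => f i x * h x) volume 0 1 := by
    intro i
    refine aux_intInt hmeash hnn hC _ (by fun_prop) (1 + |c (i.1 + 1)|) fun x hx => ?_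
    refine le_trans (abs_sub _ _) ?_
    gcongr
    rw [abs_pow]
    exact pow_le_one₀ (abs_nonneg _) (abs_le.2 ⟨by linarith [hx.1], hx.2⟩)
  have horth : ∀ i : Fin k, (∫ x in (0:ℝ)..1, f i x * h x) = 0 := by
    intro i
    have h0 : IntervalIntegrable (fun x => c (i.1 + 1) * h x) volume 0 1 := by
      have := (Jint 0).const_mul (c (i.1 + 1))
      simpa using this
    have hre : (∫ x in (0:ℝ)..1, f i x * h x) =
        (∫ x in (0:ℝ)..1, (x ^ (i.1+1) * h x - c (i.1+1) * h x)) := by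
      refine intervalIntegral.integral_congr fun x _ => ?_
      simp only [hfdef, sub_mul]
    rw [hre, intervalIntegral.integral_sub (Jint _) h0,
      intervalIntegral.integral_const_mul]
    have hJ0' : (∫ x in (0:ℝ)..1, h x) = J 0 := by
      simp only [hJ, pow_zero, one_mul]
    rw [hJ0', hc]
    field_simp
    exact sub_self _
  have hli : LinearIndependent ℝ f := by
    rw [Fintype.linearIndependent_iff]
    intro g hg i
    set P : Polynomial ℝ := ∑ j : Fin k,
      Polynomial.C (g j) * (Polynomial.X ^ (j.1 + 1) - Polynomial.C (c (j.1 + 1))) with hP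
    have hPe : ∀ x : ℝ, P.eval x = 0 := by
      intro x
      have hx := congrFun hg x
      simp only [Finset.sum_apply, Pi.smul_apply, smul_eq_mul, Pi.zero_apply, hfdef] at hx
      simp only [hP, Polynomial.eval_finset_sum, Polynomial.eval_mul, Polynomial.eval_C,
        Polynomial.eval_sub, Polynomial.eval_pow, Polynomial.eval_X]
      exact hx
    have hP0 : P = 0 := Polynomial.funext fun r => by rw [hPe r, Polynomial.eval_zero]
    have hcoeff := congrArg (fun q => Polynomial.coeff q (i.1 + 1)) hP0
    simp only [Polynomial.coeff_zero] at hcoeff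
    rw [hP, Polynomial.finset_sum_coeff] at hcoeff
    have hterm : ∀ j : Fin k,
        (Polynomial.C (g j) * (Polynomial.X ^ (j.1 + 1) -
          Polynomial.C (c (j.1 + 1)))).coeff (i.1 + 1) = if j = i then g j else 0 := by
      intro j
      rw [Polynomial.coeff_C_mul, Polynomial.coeff_sub, Polynomial.coeff_X_pow,
        Polynomial.coeff_C]
      by_cases hji : j = i
      · subst hji; simp
      · have h1 : ¬ (i.1 + 1 = j.1 + 1) := by
          simp only [add_left_inj]
          exact fun hc' => hji (Fin.ext hc'.symm)
        have h2 : ¬ (i.1 + 1 = 0) := by omega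
        have h3 : ¬ (i.1 = j.1) := fun hc' => hji (Fin.ext hc'.symm)
        simp [h1, h2, h3, hji]
    rw [Finset.sum_congr rfl fun j _ => hterm j, Finset.sum_ite_eq' Finset.univ i g] at hcoeff
    simpa using hcoeff
  refine ⟨Submodule.span ℝ (Set.range f), ?_, ?_⟩
  · rw [finrank_span_eq_card hli, Fintype.card_fin]
  · intro u hu
    rw [Submodule.mem_span_range_iff_exists_fun] at hu
    obtain ⟨g, hg⟩ := hu
    constructor
    · have : u = fun x => ∑ i : Fin k, g i * f i x := by
        funext x
        rw [← hg]
        simp [Finset.sum_apply]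
      rw [this]
      exact (ContDiff.sum fun i _ => contDiff_const.mul (hfC i)).contDiffOn
    · have hfun : (fun x => u x * h x) = fun x => ∑ i : Fin k, g i * (f i x * h x) := by
        funext x
        rw [← hg]
        simp only [Finset.sum_apply, Pi.smul_apply, smul_eq_mul, Finset.sum_mul, mul_assoc]
      rw [hfun, intervalIntegral.integral_finset_sum (fun i _ => (hInt i).const_mul (g i))]
      refine Finset.sum_eq_zero fun i _ => ?_
      rw [intervalIntegral.integral_const_mul, horth i, mul_zero]

end AuxStmt19

theorem stmt19 (d : ℕ) (hd : 2 ≤ d) (Ω : Set (ℝ × (Fin (d - 1) → ℝ)))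
    (hopen : IsOpen Ω) (hconn : IsConnected Ω) (hbdd : Bornology.IsBounded Ω)
    (hdiam : Metric.diam Ω = 1)
    (hproj : ∀ p ∈ Ω, p.1 ∈ Set.Icc (0:ℝ) 1)
    (hdiamax : ∃ p ∈ closure Ω, ∃ q ∈ closure Ω,
      p.1 = 0 ∧ q.1 = 1 ∧ dist p q = 1)
    (h : ℝ → ℝ)
    (hh : ∀ x, h x = (volume {y : Fin (d - 1) → ℝ | (x, y) ∈ Ω}).toReal) :
    ∀ k : ℕ, 1 ≤ k → mukNeumann k Ω ≤ muk1D k h := by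
  intro k hk
  unfold mukNeumann muk1D
  apply csInf_le_csInf
  · -- bounded below by 0
    refine ⟨0, ?_⟩
    rintro r ⟨E, -, -, rfl⟩
    refine Real.sSup_nonneg fun s hs => ?_
    obtain ⟨u, -, -, rfl⟩ := hs
    exact div_nonneg (integral_nonneg fun x => by positivity)
      (integral_nonneg fun x => sq_nonneg _)
  · -- the 1D competitor set is nonempty
    obtain ⟨E, h1, h2⟩ := aux_nonempty hopen hconn.nonempty hbdd hproj hh k
    exact ⟨_, E, h1, h2, rfl⟩
  · -- every 1D competitor lifts to a competitor on Ω
    rintro r ⟨E, hrank, hmem, rfl⟩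
    set L : (ℝ → ℝ) →ₗ[ℝ] ((ℝ × (Fin (d - 1) → ℝ)) → ℝ) :=
      { toFun := fun u => fun p => u p.1
        map_add' := fun u v => rfl
        map_smul' := fun a u => rfl } with hLdef
    have hinj : Function.Injective L := by
      intro u v huv
      funext x
      exact congrFun huv (x, 0)
    have hray : ∀ u : ℝ → ℝ, ContDiffOn ℝ 1 u (Set.Icc 0 1) →
        rayleighD Ω (L u) = rayleigh1D h u := by
      intro u hC1
      obtain ⟨k1, k2, -⟩ := aux_key hopen hbdd hproj hh hC1
      have e1 : rayleighD Ω (L u) =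
          (∫ p in Ω, ‖fderiv ℝ (fun q : ℝ × (Fin (d - 1) → ℝ) => u q.1) p‖ ^ 2) /
            (∫ p in Ω, (u p.1) ^ 2) := rfl
      rw [e1, k1, k2]
      rfl
    refine ⟨E.map L, ?_, ?_, ?_⟩
    · rw [← (Submodule.equivMapOfInjective L hinj E).finrank_eq]
      exact hrank
    · rintro v hv
      obtain ⟨u, huE, rfl⟩ := Submodule.mem_map.1 hv
      obtain ⟨hC1, hI1⟩ := hmem u huE
      constructor
      · refine hC1.comp (contDiff_fst.contDiffOn) ?_
        intro p hp
        exact closure_minimal (fun q hq => hproj q hq)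
          (isClosed_Icc.preimage continuous_fst) hp
      · show (∫ p in Ω, u p.1) = 0
        rw [(aux_key hopen hbdd hproj hh hC1).2.2]
        exact hI1
    · refine congrArg sSup ?_
      ext s
      simp only [Set.mem_setOf_eq]
      constructor
      · rintro ⟨u, huE, hune, rfl⟩
        refine ⟨L u, Submodule.mem_map_of_mem huE, ?_, ?_⟩
        · intro hz
          exact hune (hinj (by rw [hz, map_zero]))
        · exact (hray u (hmem u huE).1).symm
      · rintro ⟨v, hvF, hvne, rfl⟩
        obtain ⟨u, huE, rfl⟩ := Submodule.mem_map.1 hvF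
        have hune : u ≠ 0 := fun hz => hvne (by rw [hz, map_zero])
        exact ⟨u, huE, hune, hray u (hmem u huE).1⟩
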